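/- For every 3CNF formula φ with n ≥ 4 variables and ε = 1/(2n³): φ is satisfiable if and only if the game G(φ) has an ε-Nash equilibrium (x, y) with disjoint supports, i.e. Supp(x) ∩ Supp(y) = ∅. Moreover, when φ is satisfiable there is an exact Nash equilibrium with disjoint supports in which the row player uniformly randomizes over the n satisfying literals in its copy L₁ and the column player over the corresponding literals in L₂. -/
import Mathlib


open Finset

/-- The probability simplex over a finite strategy set `S`. -/
def simplex (S : Type*) [Fintype S] : Set (S → ℝ) :=
  {x | (∀ i, 0 ≤ x i) ∧ ∑ i, x i = 1}

/-- Expected payoff `Σᵢⱼ xᵢ yⱼ A i j`. -/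
def payoff {S : Type*} [Fintype S] (A : S → S → ℝ) (x y : S → ℝ) : ℝ :=
  ∑ i, ∑ j, x i * y j * A i j

/-- The point mass at pure strategy `s`. -/
def pureStrat {S : Type*} [DecidableEq S] (s : S) : S → ℝ :=
  fun i => if i = s then 1 else 0

/-- Support of a mixed strategy. -/
def supp {S : Type*} (x : S → ℝ) : Set S := {i | 0 < x i}

/-- L1 distance between mixed strategies. -/
def dist1 {S : Type*} [Fintype S] (x y : S → ℝ) : ℝ := ∑ i, |x i - y i|

/-- `(x, y)` is an ε-Nash equilibrium of the bi-matrix game `(R, C)`. -/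
def IsEpsNash {S : Type*} [Fintype S] [DecidableEq S]
    (R C : S → S → ℝ) (x y : S → ℝ) (ε : ℝ) : Prop :=
  x ∈ simplex S ∧ y ∈ simplex S ∧
  (∀ s : S, payoff R (pureStrat s) y ≤ payoff R x y + ε) ∧
  (∀ s : S, payoff C x (pureStrat s) ≤ payoff C x y + ε)

/-- A literal over `n` variables: a variable together with a sign
(`true` = the positive literal, `false` = the negated literal). -/
abbrev Lit (n : ℕ) := Fin n × Bool

/-- Negation of a literal. -/
def negLit {n : ℕ} (l : Lit n) : Lit n := (l.1, !l.2)

/-- A 3CNF formula with `n` variables and `m` clauses; each clause is a set of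
exactly 3 literals. -/
structure CNF3 (n m : ℕ) where
  clause : Fin m → Finset (Lit n)
  card3 : ∀ c, (clause c).card = 3

/-- An assignment `a` satisfies a clause if some literal of the clause is true under `a`. -/
def SatAssign {n m : ℕ} (φ : CNF3 n m) (a : Fin n → Bool) : Prop :=
  ∀ c, ∃ l ∈ φ.clause c, a l.1 = l.2

/-- Satisfiability of a 3CNF formula. -/
def CNF3.Satisfiable {n m : ℕ} (φ : CNF3 n m) : Prop :=
  ∃ a : Fin n → Bool, SatAssign φ a

/-- Strategy set of the game `G(φ)`: two copies `L₁`, `L₂` of the literals,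
then the variables, the clauses, and the special strategy `f`. -/
abbrev GStrat (n m : ℕ) := Lit n ⊕ (Lit n ⊕ (Fin n ⊕ (Fin m ⊕ Unit)))

/-- The special strategy `f` of the game `G(φ)`. -/
def fStrat (n m : ℕ) : GStrat n m := Sum.inr (Sum.inr (Sum.inr (Sum.inr ())))

/-- The row player's payoff in the game `G(φ)`. -/
def gU1 {n m : ℕ} (φ : CNF3 n m) : GStrat n m → GStrat n m → ℝ
  | Sum.inr (Sum.inl _), _ => -2 * (n : ℝ)
  | Sum.inr (Sum.inr (Sum.inr (Sum.inr _))),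
      Sum.inr (Sum.inr (Sum.inr (Sum.inr _))) => 2 * (n : ℝ)
  | Sum.inr (Sum.inr (Sum.inr (Sum.inr _))), _ => (n : ℝ) - 1
  | _, Sum.inr (Sum.inr (Sum.inr (Sum.inr _))) => 0
  | _, Sum.inl _ => 0
  | Sum.inl a, Sum.inr (Sum.inl b) =>
      if a = negLit b then (n : ℝ) - 4 else (n : ℝ) - 1
  | Sum.inl _, _ => (n : ℝ) - 4
  | Sum.inr (Sum.inr (Sum.inl w)), Sum.inr (Sum.inl l) =>
      if l.1 = w then 0 else (n : ℝ)
  | Sum.inr (Sum.inr (Sum.inl _)), _ => (n : ℝ) - 4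
  | Sum.inr (Sum.inr (Sum.inr (Sum.inl c))), Sum.inr (Sum.inl l) =>
      if l ∈ φ.clause c then 0 else (n : ℝ)
  | Sum.inr (Sum.inr (Sum.inr (Sum.inl _))), _ => (n : ℝ) - 4

/-- The column player's payoff in the game `G(φ)`. -/
def gU2 {n m : ℕ} (φ : CNF3 n m) : GStrat n m → GStrat n m → ℝ
  | _, Sum.inl _ => -2 * (n : ℝ)
  | Sum.inr (Sum.inr (Sum.inr (Sum.inr _))),
      Sum.inr (Sum.inr (Sum.inr (Sum.inr _))) => 2 * (n : ℝ)
  | _, Sum.inr (Sum.inr (Sum.inr (Sum.inr _))) => (n : ℝ) - 1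
  | Sum.inr (Sum.inr (Sum.inr (Sum.inr _))), _ => 0
  | Sum.inr (Sum.inl _), _ => 0
  | Sum.inl a, Sum.inr (Sum.inl b) =>
      if a = negLit b then (n : ℝ) - 4 else (n : ℝ) - 1
  | _, Sum.inr (Sum.inl _) => (n : ℝ) - 4
  | Sum.inl a, Sum.inr (Sum.inr (Sum.inl w)) =>
      if a.1 = w then 0 else (n : ℝ)
  | _, Sum.inr (Sum.inr (Sum.inl _)) => (n : ℝ) - 4
  | Sum.inl a, Sum.inr (Sum.inr (Sum.inr (Sum.inl c))) =>
      if a ∈ φ.clause c then 0 else (n : ℝ)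
  | _, Sum.inr (Sum.inr (Sum.inr (Sum.inl _))) => (n : ℝ) - 4

/-- The row player's strategy that randomizes uniformly over the `n` satisfying
literals in the copy `L₁`. -/
noncomputable def unifL1 {n m : ℕ} (a : Fin n → Bool) : GStrat n m → ℝ
  | Sum.inl l => if a l.1 = l.2 then 1 / (n : ℝ) else 0
  | _ => 0

/-- The column player's strategy that randomizes uniformly over the `n` satisfying
literals in the copy `L₂`. -/
noncomputable def unifL2 {n m : ℕ} (a : Fin n → Bool) : GStrat n m → ℝ
  | Sum.inr (Sum.inl l) => if a l.1 = l.2 then 1 / (n : ℝ) else 0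
  | _ => 0


namespace CSAux
open Finset
variable {n m : ℕ}

def s1 (l : Lit n) : GStrat n m := Sum.inl l
def s2 (l : Lit n) : GStrat n m := Sum.inr (Sum.inl l)
def sV (w : Fin n) : GStrat n m := Sum.inr (Sum.inr (Sum.inl w))
def sC (c : Fin m) : GStrat n m := Sum.inr (Sum.inr (Sum.inr (Sum.inl c)))

theorem negLit_negLit (l : Lit n) : negLit (negLit l) = l := by simp [negLit]
theorem negLit_comm {a b : Lit n} : a = negLit b ↔ b = negLit a := by
  constructor <;> (rintro rfl; simp [negLit])

/-- swap involution exchanging the two literal copies -/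
def σg : GStrat n m → GStrat n m
  | Sum.inl l => Sum.inr (Sum.inl l)
  | Sum.inr (Sum.inl l) => Sum.inl l
  | s => s

theorem σg_invol : ∀ s : GStrat n m, σg (σg s) = s := by rintro (s|s|s|s|s) <;> rfl

def σe : Equiv.Perm (GStrat n m) := Function.Involutive.toPerm σg σg_invol

theorem gU2_symm (φ : CNF3 n m) (a b : GStrat n m) : gU2 φ a b = gU1 φ (σg b) (σg a) := by
  rcases a with a|a|a|a|a <;> rcases b with b|b|b|b|b <;> try rfl
  show (if a = negLit b then (n:ℝ)-4 else (n:ℝ)-1) = (if b = negLit a then (n:ℝ)-4 else (n:ℝ)-1)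
  by_cases h : a = negLit b
  · rw [if_pos h, if_pos (negLit_comm.mp h)]
  · rw [if_neg h, if_neg fun hh => h (negLit_comm.mpr hh)]

variable (φ : CNF3 n m)

@[simp] theorem g_s1_s1 (a b : Lit n) : gU1 φ (s1 a) (s1 b) = 0 := rfl
@[simp] theorem g_s1_s2 (a b : Lit n) :
    gU1 φ (s1 a) (s2 b) = if a = negLit b then (n:ℝ)-4 else (n:ℝ)-1 := rfl
@[simp] theorem g_s1_sV (a : Lit n) (w : Fin n) : gU1 φ (s1 a) (sV w) = (n:ℝ)-4 := rfl
@[simp] theorem g_s1_sC (a : Lit n) (c : Fin m) : gU1 φ (s1 a) (sC c) = (n:ℝ)-4 := rfl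
@[simp] theorem g_s1_f (a : Lit n) : gU1 φ (s1 a) (fStrat n m) = 0 := rfl
@[simp] theorem g_s2 (l : Lit n) (j : GStrat n m) : gU1 φ (s2 l) j = -2*(n:ℝ) := by
  rcases j with j|j|j|j|j <;> rfl
@[simp] theorem g_sV_s1 (w : Fin n) (b : Lit n) : gU1 φ (sV w) (s1 b) = 0 := rfl
@[simp] theorem g_sV_s2 (w : Fin n) (b : Lit n) :
    gU1 φ (sV w) (s2 b) = if b.1 = w then 0 else (n:ℝ) := rfl
@[simp] theorem g_sV_sV (w v : Fin n) : gU1 φ (sV w) (sV v) = (n:ℝ)-4 := rfl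
@[simp] theorem g_sV_sC (w : Fin n) (c : Fin m) : gU1 φ (sV w) (sC c) = (n:ℝ)-4 := rfl
@[simp] theorem g_sV_f (w : Fin n) : gU1 φ (sV w) (fStrat n m) = 0 := rfl
@[simp] theorem g_sC_s1 (c : Fin m) (b : Lit n) : gU1 φ (sC c) (s1 b) = 0 := rfl
@[simp] theorem g_sC_s2 (c : Fin m) (b : Lit n) :
    gU1 φ (sC c) (s2 b) = if b ∈ φ.clause c then 0 else (n:ℝ) := rfl
@[simp] theorem g_sC_sV (c : Fin m) (v : Fin n) : gU1 φ (sC c) (sV v) = (n:ℝ)-4 := rfl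
@[simp] theorem g_sC_sC (c c' : Fin m) : gU1 φ (sC c) (sC c') = (n:ℝ)-4 := rfl
@[simp] theorem g_sC_f (c : Fin m) : gU1 φ (sC c) (fStrat n m) = 0 := rfl
@[simp] theorem g_f_s1 (b : Lit n) : gU1 φ (fStrat n m) (s1 b) = (n:ℝ)-1 := rfl
@[simp] theorem g_f_s2 (b : Lit n) : gU1 φ (fStrat n m) (s2 b) = (n:ℝ)-1 := rfl
@[simp] theorem g_f_sV (v : Fin n) : gU1 φ (fStrat n m) (sV v) = (n:ℝ)-1 := rfl
@[simp] theorem g_f_sC (c : Fin m) : gU1 φ (fStrat n m) (sC c) = (n:ℝ)-1 := rfl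
@[simp] theorem g_f_f : gU1 φ (fStrat n m) (fStrat n m) = 2*(n:ℝ) := rfl

theorem sum_g (g : GStrat n m → ℝ) :
    ∑ s, g s = (∑ l, g (s1 l)) + (∑ l, g (s2 l)) + (∑ w, g (sV w)) + (∑ c, g (sC c))
      + g (fStrat n m) := by
  simp only [Fintype.sum_sum_type, Finset.univ_unique, Finset.sum_singleton, s1, s2, sV,
    sC, fStrat]
  ring

/-! ### masses -/
def pm (y : GStrat n m → ℝ) (l : Lit n) : ℝ := y (s2 l)
def qm (x : GStrat n m → ℝ) (l : Lit n) : ℝ := x (s1 l)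
def Pv (y : GStrat n m → ℝ) (w : Fin n) : ℝ := pm y (w, true) + pm y (w, false)
def Pcl (y : GStrat n m → ℝ) (c : Fin m) : ℝ := ∑ l ∈ φ.clause c, pm y l
def mL1 (x : GStrat n m → ℝ) : ℝ := ∑ l, qm x l
def mL2 (x : GStrat n m → ℝ) : ℝ := ∑ l, pm x l
def mV (x : GStrat n m → ℝ) : ℝ := ∑ w, x (sV w)
def mC (x : GStrat n m → ℝ) : ℝ := ∑ c, x (sC c)

theorem sum_lit_var (g : Lit n → ℝ) (w : Fin n) :
    ∑ l : Lit n, (if l.1 = w then g l else 0) = g (w, true) + g (w, false) := by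
  rw [Fintype.sum_prod_type]
  have h : ∀ v : Fin n, (∑ b : Bool, if (v, b).1 = w then g (v, b) else 0)
      = (if v = w then g (v, true) + g (v, false) else 0) := by
    intro v; by_cases h : v = w <;> simp [h]
  rw [Finset.sum_congr rfl fun v _ => h v, Finset.sum_ite_eq' Finset.univ w]
  simp

/-! ### closed forms of pure-row payoffs -/
def RP (y : GStrat n m → ℝ) (s : GStrat n m) : ℝ := ∑ j, y j * gU1 φ s j

theorem RP_f (y : GStrat n m → ℝ) :
    RP φ y (fStrat n m) = ((n:ℝ)-1) * (mL1 y + mL2 y + mV y + mC y)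
      + 2*(n:ℝ) * y (fStrat n m) := by
  rw [RP, sum_g]
  simp only [g_f_s1, g_f_s2, g_f_sV, g_f_sC, g_f_f]
  simp only [mL1, mL2, mV, mC, qm, pm, ← Finset.sum_mul]
  ring

theorem RP_s2 (y : GStrat n m → ℝ) (l : Lit n) :
    RP φ y (s2 l) = -2*(n:ℝ) * ((mL1 y + mL2 y + mV y + mC y) + y (fStrat n m)) := by
  rw [RP, sum_g]
  simp only [g_s2]
  simp only [mL1, mL2, mV, mC, qm, pm, ← Finset.sum_mul]
  ring

theorem RP_s1 (y : GStrat n m → ℝ) (a : Lit n) :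
    RP φ y (s1 a) = ((n:ℝ)-1) * mL2 y - 3 * pm y (negLit a)
      + ((n:ℝ)-4) * (mV y + mC y) := by
  rw [RP, sum_g]
  simp only [g_s1_s1, g_s1_s2, g_s1_sV, g_s1_sC, g_s1_f, mul_zero, Finset.sum_const_zero]
  have h : ∀ l : Lit n, y (s2 l) * (if a = negLit l then (n:ℝ)-4 else (n:ℝ)-1)
      = ((n:ℝ)-1) * y (s2 l) - (if l = negLit a then 3 * y (s2 l) else 0) := by
    intro l
    by_cases h : l = negLit a
    · rw [if_pos (negLit_comm.mpr h), if_pos h]; ring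
    · rw [if_neg fun hh => h (negLit_comm.mp hh), if_neg h]; ring
  rw [Finset.sum_congr rfl fun l _ => h l, Finset.sum_sub_distrib,
    Finset.sum_ite_eq' Finset.univ (negLit a)]
  simp only [Finset.mem_univ, if_true, mL2, mV, mC, pm, ← Finset.mul_sum,
    ← Finset.sum_mul]
  ring

theorem RP_sV (y : GStrat n m → ℝ) (w : Fin n) :
    RP φ y (sV w) = (n:ℝ) * (mL2 y - Pv y w) + ((n:ℝ)-4) * (mV y + mC y) := by
  rw [RP, sum_g]
  simp only [g_sV_s1, g_sV_s2, g_sV_sV, g_sV_sC, g_sV_f, mul_zero, Finset.sum_const_zero]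
  have h : ∀ l : Lit n, y (s2 l) * (if l.1 = w then 0 else (n:ℝ))
      = (n:ℝ) * y (s2 l) - (if l.1 = w then (n:ℝ) * y (s2 l) else 0) := by
    intro l; by_cases h : l.1 = w <;> simp [h] <;> ring
  rw [Finset.sum_congr rfl fun l _ => h l, Finset.sum_sub_distrib,
    sum_lit_var (fun l => (n:ℝ) * y (s2 l)) w]
  simp only [mL2, mV, mC, pm, Pv, ← Finset.mul_sum, ← Finset.sum_mul]
  ring

theorem RP_sC (y : GStrat n m → ℝ) (c : Fin m) :
    RP φ y (sC c) = (n:ℝ) * (mL2 y - Pcl φ y c) + ((n:ℝ)-4) * (mV y + mC y) := by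
  rw [RP, sum_g]
  simp only [g_sC_s1, g_sC_s2, g_sC_sV, g_sC_sC, g_sC_f, mul_zero, Finset.sum_const_zero]
  have h : ∀ l : Lit n, y (s2 l) * (if l ∈ φ.clause c then 0 else (n:ℝ))
      = (n:ℝ) * y (s2 l) - (if l ∈ φ.clause c then (n:ℝ) * y (s2 l) else 0) := by
    intro l; by_cases h : l ∈ φ.clause c <;> simp [h] <;> ring
  rw [Finset.sum_congr rfl fun l _ => h l, Finset.sum_sub_distrib,
    Finset.sum_ite_mem, Finset.univ_inter]
  simp only [mL2, mV, mC, pm, Pcl, ← Finset.mul_sum, ← Finset.sum_mul]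
  ring

end CSAux

namespace CSAux
open Finset
variable {n m : ℕ} (φ : CNF3 n m)

/-! ### payoff plumbing -/
def EU (x y : GStrat n m → ℝ) : ℝ := ∑ s, x s * RP φ y s

theorem payoff_eq {S : Type*} [Fintype S] (A : S → S → ℝ) (x y : S → ℝ) :
    payoff A x y = ∑ i, x i * ∑ j, y j * A i j := by
  simp only [payoff, Finset.mul_sum, mul_assoc]

theorem payoff_RP (x y : GStrat n m → ℝ) : payoff (gU1 φ) x y = EU φ x y := by
  rw [payoff_eq]; rfl

theorem payoff_pure_left {S : Type*} [Fintype S] [DecidableEq S] (A : S → S → ℝ)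
    (s : S) (y : S → ℝ) : payoff A (pureStrat s) y = ∑ j, y j * A s j := by
  rw [payoff_eq]
  have h : ∀ i, pureStrat s i * (∑ j, y j * A i j)
      = if i = s then (∑ j, y j * A i j) else 0 := by
    intro i; by_cases h : i = s <;> simp [pureStrat, h]
  rw [Finset.sum_congr rfl fun i _ => h i, Finset.sum_ite_eq' Finset.univ s]
  simp

theorem payoff_pure_right {S : Type*} [Fintype S] [DecidableEq S] (A : S → S → ℝ)
    (x : S → ℝ) (t : S) : payoff A x (pureStrat t) = ∑ i, x i * A i t := by
  unfold payoff
  have h : ∀ i, (∑ j, x i * pureStrat t j * A i j) = x i * A i t := by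
    intro i
    have h2 : ∀ j, x i * pureStrat t j * A i j = if j = t then x i * A i j else 0 := by
      intro j; by_cases h : j = t <;> simp [pureStrat, h]
    rw [Finset.sum_congr rfl fun j _ => h2 j, Finset.sum_ite_eq' Finset.univ t]
    simp
  exact Finset.sum_congr rfl fun i _ => h i

end CSAux

namespace CSAux
open Finset
variable {n m : ℕ} (φ : CNF3 n m)

/-! ### symmetry transport -/
theorem sum_comp_σg (g : GStrat n m → ℝ) : ∑ s, g (σg s) = ∑ s, g s :=
  Equiv.sum_comp σe g

theorem simplex_comp {x : GStrat n m → ℝ} (hx : x ∈ simplex (GStrat n m)) :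
    (x ∘ σg) ∈ simplex (GStrat n m) := by
  refine ⟨fun i => hx.1 _, ?_⟩
  rw [show ∑ i, (x ∘ σg) i = ∑ i, x i from sum_comp_σg x]
  exact hx.2

theorem payoff_gU2 (x y : GStrat n m → ℝ) :
    payoff (gU2 φ) x y = EU φ (y ∘ σg) (x ∘ σg) := by
  unfold payoff
  rw [Finset.sum_comm]
  unfold EU RP
  refine Fintype.sum_equiv σe _ _ fun j => ?_
  rw [Finset.mul_sum]
  refine Fintype.sum_equiv σe _ _ fun i => ?_
  show x i * y j * gU2 φ i j
      = y (σg (σg j)) * (x (σg (σg i)) * gU1 φ (σg j) (σg i))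
  rw [σg_invol, σg_invol, gU2_symm]
  ring

theorem payoff_gU2_pure (x : GStrat n m → ℝ) (t : GStrat n m) :
    payoff (gU2 φ) x (pureStrat t) = RP φ (x ∘ σg) (σg t) := by
  rw [payoff_pure_right]
  unfold RP
  refine Fintype.sum_equiv σe _ _ fun i => ?_
  show x i * gU2 φ i t = x (σg (σg i)) * gU1 φ (σg t) (σg i)
  rw [σg_invol, gU2_symm]

@[simp] theorem σg_f : σg (fStrat n m) = fStrat n m := rfl
@[simp] theorem σg_s1 (l : Lit n) : σg (s1 (m := m) l) = s2 l := rfl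
@[simp] theorem σg_s2 (l : Lit n) : σg (s2 (m := m) l) = s1 l := rfl

theorem mL1_comp (y : GStrat n m → ℝ) : mL1 (y ∘ σg) = mL2 y := rfl
theorem mL2_comp (y : GStrat n m → ℝ) : mL2 (y ∘ σg) = mL1 y := rfl
theorem mV_comp (y : GStrat n m → ℝ) : mV (y ∘ σg) = mV y := rfl
theorem mC_comp (y : GStrat n m → ℝ) : mC (y ∘ σg) = mC y := rfl
theorem pm_comp (y : GStrat n m → ℝ) (l : Lit n) : pm (y ∘ σg) l = qm y l := rfl
theorem f_comp (y : GStrat n m → ℝ) : (y ∘ σg) (fStrat n m) = y (fStrat n m) := rfl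

/-! ### mass facts -/
theorem mass_sum {x : GStrat n m → ℝ} (hx : x ∈ simplex (GStrat n m)) :
    mL1 x + mL2 x + mV x + mC x + x (fStrat n m) = 1 := by
  have h := hx.2
  rw [sum_g] at h
  simpa [mL1, mL2, mV, mC, qm, pm] using h

section masses
variable {y : GStrat n m → ℝ} (hy : y ∈ simplex (GStrat n m))
include hy

theorem pm_nonneg (l : Lit n) : 0 ≤ pm y l := hy.1 _
theorem qm_nonneg (l : Lit n) : 0 ≤ qm y l := hy.1 _
theorem mL1_nonneg : 0 ≤ mL1 y := Finset.sum_nonneg fun _ _ => hy.1 _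
theorem mL2_nonneg : 0 ≤ mL2 y := Finset.sum_nonneg fun _ _ => hy.1 _
theorem mV_nonneg : 0 ≤ mV y := Finset.sum_nonneg fun _ _ => hy.1 _
theorem mC_nonneg : 0 ≤ mC y := Finset.sum_nonneg fun _ _ => hy.1 _
theorem f_nonneg : 0 ≤ y (fStrat n m) := hy.1 _
theorem Pv_nonneg (w : Fin n) : 0 ≤ Pv y w := by
  have := hy.1 (s2 ((w : Fin n), true)); have := hy.1 (s2 ((w : Fin n), false))
  unfold Pv pm; positivity

theorem Pcl_nonneg (c : Fin m) : 0 ≤ Pcl φ y c := Finset.sum_nonneg fun _ _ => hy.1 _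

theorem pm_le_mL2 (l : Lit n) : pm y l ≤ mL2 y :=
  Finset.single_le_sum (f := pm y) (fun i _ => hy.1 _) (Finset.mem_univ l)

theorem Pv_le_mL2 (w : Fin n) : Pv y w ≤ mL2 y := by
  have hne : ((w, true) : Lit n) ≠ (w, false) := by simp
  have h : Pv y w = ∑ l ∈ ({(w, true), (w, false)} : Finset (Lit n)), pm y l := by
    rw [Finset.sum_pair hne]; rfl
  rw [h]
  exact Finset.sum_le_sum_of_subset_of_nonneg (Finset.subset_univ _)
    fun i _ _ => hy.1 _

theorem Pcl_le_mL2 (c : Fin m) : Pcl φ y c ≤ mL2 y :=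
  Finset.sum_le_sum_of_subset_of_nonneg (Finset.subset_univ _) fun i _ _ => hy.1 _

theorem mL2_eq_sum_Pv : mL2 y = ∑ w, Pv y w := by
  unfold mL2 Pv
  rw [Fintype.sum_prod_type]
  exact Finset.sum_congr rfl fun v _ => by rw [Fintype.sum_bool]

end masses

/-! ### strategy shapes -/
theorem strat_cases (s : GStrat n m) :
    s = fStrat n m ∨ (∃ l, s = s1 l) ∨ (∃ l, s = s2 l) ∨ (∃ w, s = sV w) ∨ ∃ c, s = sC c := by
  rcases s with l|l|w|c|u
  · exact Or.inr (Or.inl ⟨l, rfl⟩)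
  · exact Or.inr (Or.inr (Or.inl ⟨l, rfl⟩))
  · exact Or.inr (Or.inr (Or.inr (Or.inl ⟨w, rfl⟩)))
  · exact Or.inr (Or.inr (Or.inr (Or.inr ⟨c, rfl⟩)))
  · exact Or.inl rfl

/-! ### Lemma A -/
theorem lemA {x y : GStrat n m → ℝ} {ε : ℝ} (hx : x ∈ simplex (GStrat n m)) (hε : 0 ≤ ε)
    (hrow : ∀ s, RP φ y s ≤ EU φ x y + ε)
    (T : Finset (GStrat n m)) (γ : ℝ)
    (hT : ∀ s ∈ T, RP φ y s + γ ≤ EU φ x y) :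
    γ * ∑ s ∈ T, x s ≤ ε := by
  set U := EU φ x y with hU
  have h0 : ∑ s, x s * (U - RP φ y s) = 0 := by
    calc ∑ s, x s * (U - RP φ y s) = ∑ s, (x s * U - x s * RP φ y s) := by
          exact Finset.sum_congr rfl fun s _ => by ring
      _ = (∑ s, x s) * U - EU φ x y := by
          rw [Finset.sum_sub_distrib, Finset.sum_mul]; rfl
      _ = 0 := by rw [hx.2, one_mul, hU]; ring
  have hsplit : ∑ s ∈ T, x s * (U - RP φ y s) + ∑ s ∈ Tᶜ, x s * (U - RP φ y s) = 0 := by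
    rw [Finset.sum_add_sum_compl]; exact h0
  have h1 : γ * ∑ s ∈ T, x s ≤ ∑ s ∈ T, x s * (U - RP φ y s) := by
    rw [Finset.mul_sum]
    refine Finset.sum_le_sum fun s hs => ?_
    have h := hT s hs
    nlinarith [hx.1 s]
  have h2 : ∑ s ∈ Tᶜ, (-(x s * ε)) ≤ ∑ s ∈ Tᶜ, x s * (U - RP φ y s) := by
    refine Finset.sum_le_sum fun s _ => ?_
    have h := hrow s
    nlinarith [hx.1 s]
  have h3 : ∑ s ∈ Tᶜ, (-(x s * ε)) = -((∑ s ∈ Tᶜ, x s) * ε) := by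
    rw [Finset.sum_neg_distrib, Finset.sum_mul]
  have h4 : ∑ s ∈ Tᶜ, x s ≤ 1 := by
    calc ∑ s ∈ Tᶜ, x s ≤ ∑ s, x s :=
          Finset.sum_le_sum_of_subset_of_nonneg (Finset.subset_univ _) fun i _ _ => hx.1 i
      _ = 1 := hx.2
  have h5 : (∑ s ∈ Tᶜ, x s) * ε ≤ 1 * ε := by
    apply mul_le_mul_of_nonneg_right h4 hε
  linarith

theorem sum_T_L1 (x : GStrat n m → ℝ) :
    ∑ s ∈ Finset.univ.image (s1 (n := n) (m := m)), x s = mL1 x := by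
  have hinj : ∀ a ∈ (Finset.univ : Finset (Lit n)), ∀ b ∈ Finset.univ,
      s1 (n := n) (m := m) a = s1 b → a = b := fun a _ b _ h => Sum.inl_injective h
  rw [Finset.sum_image hinj]; rfl

theorem sum_T_L2 (x : GStrat n m → ℝ) :
    ∑ s ∈ Finset.univ.image (s2 (n := n) (m := m)), x s = mL2 x := by
  have hinj : ∀ a ∈ (Finset.univ : Finset (Lit n)), ∀ b ∈ Finset.univ,
      s2 (n := n) (m := m) a = s2 b → a = b :=
    fun a _ b _ h => Sum.inl_injective (Sum.inr_injective h)
  rw [Finset.sum_image hinj]; rfl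

theorem sum_T_fcompl {x : GStrat n m → ℝ} (hx : x ∈ simplex (GStrat n m)) :
    ∑ s ∈ ({fStrat n m}ᶜ : Finset (GStrat n m)), x s = 1 - x (fStrat n m) := by
  have h := Finset.sum_add_sum_compl ({fStrat n m} : Finset (GStrat n m)) x
  rw [hx.2, Finset.sum_singleton] at h
  linarith

end CSAux

namespace CSAux
open Finset
variable {n m : ℕ} (φ : CNF3 n m) {x y : GStrat n m → ℝ} {ε : ℝ}

theorem hUlow (hy : y ∈ simplex (GStrat n m))
    (hrow : ∀ s, RP φ y s ≤ EU φ x y + ε) :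
    (n:ℝ) - 1 + ((n:ℝ)+1) * y (fStrat n m) - ε ≤ EU φ x y := by
  have h := hrow (fStrat n m)
  rw [RP_f] at h
  have hm := mass_sum hy
  nlinarith [h, hm]

theorem C1 (hn4 : (4:ℝ) ≤ (n:ℝ)) (hx : x ∈ simplex (GStrat n m))
    (hy : y ∈ simplex (GStrat n m)) (hε0 : 0 < ε)
    (hrow : ∀ s, RP φ y s ≤ EU φ x y + ε) :
    ((2*(n:ℝ)+1) * y (fStrat n m) - 1 - ε) * (1 - x (fStrat n m)) ≤ ε := by
  have hUl := hUlow φ hy hrow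
  have hmy := mass_sum hy
  have h0 := f_nonneg hy; have h1 := mL1_nonneg hy; have h2 := mL2_nonneg hy
  have h3 := mV_nonneg hy; have h4 := mC_nonneg hy
  have key := lemA φ hx hε0.le hrow ({fStrat n m}ᶜ)
      ((2*(n:ℝ)+1) * y (fStrat n m) - 1 - ε) ?hT
  · rwa [sum_T_fcompl hx] at key
  case hT =>
    intro s hs
    rw [Finset.mem_compl, Finset.mem_singleton] at hs
    rcases strat_cases s with h|⟨l,rfl⟩|⟨l,rfl⟩|⟨w,rfl⟩|⟨c,rfl⟩
    · exact absurd h hs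
    · rw [RP_s1]
      have hp := pm_nonneg hy (negLit l)
      nlinarith [mul_nonneg (show (0:ℝ) ≤ (n:ℝ)-1 by linarith)
        (show 0 ≤ 1 - (mL2 y + mV y + mC y + y (fStrat n m)) by linarith)]
    · rw [RP_s2]
      nlinarith [mul_nonneg (show (0:ℝ) ≤ (n:ℝ) by linarith)
        (show 0 ≤ 1 - y (fStrat n m) by linarith)]
    · rw [RP_sV]
      have hp := Pv_nonneg hy w
      nlinarith [mul_nonneg (show (0:ℝ) ≤ (n:ℝ) by linarith)
          (show 0 ≤ 1 - (mL2 y + mV y + mC y + y (fStrat n m)) by linarith),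
        mul_nonneg (show (0:ℝ) ≤ (n:ℝ) by linarith) hp]
    · rw [RP_sC]
      have hp := Pcl_nonneg φ hy c
      nlinarith [mul_nonneg (show (0:ℝ) ≤ (n:ℝ) by linarith)
          (show 0 ≤ 1 - (mL2 y + mV y + mC y + y (fStrat n m)) by linarith),
        mul_nonneg (show (0:ℝ) ≤ (n:ℝ) by linarith) hp]

theorem C3a (hn4 : (4:ℝ) ≤ (n:ℝ)) (hx : x ∈ simplex (GStrat n m))
    (hy : y ∈ simplex (GStrat n m)) (hε0 : 0 < ε) (hε1 : ε ≤ 1/128)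
    (hrow : ∀ s, RP φ y s ≤ EU φ x y + ε) :
    (3*(n:ℝ) - 2) * mL2 x ≤ ε := by
  have hUl := hUlow φ hy hrow
  have hmy := mass_sum hy
  have h0 := f_nonneg hy
  have key := lemA φ hx hε0.le hrow (Finset.univ.image (s2 (n := n) (m := m)))
      (3*(n:ℝ) - 2) ?hT
  · rwa [sum_T_L2] at key
  case hT =>
    intro s hs
    obtain ⟨l, -, rfl⟩ := Finset.mem_image.mp hs
    rw [RP_s2]
    nlinarith [mul_nonneg (show (0:ℝ) ≤ (n:ℝ)+1 by linarith) h0]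

theorem C3b (hn4 : (4:ℝ) ≤ (n:ℝ)) (hx : x ∈ simplex (GStrat n m))
    (hy : y ∈ simplex (GStrat n m)) (hε0 : 0 < ε) (hε1 : ε ≤ 1/128)
    (hrow : ∀ s, RP φ y s ≤ EU φ x y + ε)
    (hxf : x (fStrat n m) ≤ 1/4) :
    7/10 ≤ mL2 y := by
  by_contra hc
  push_neg at hc
  have hUl := hUlow φ hy hrow
  have hmy := mass_sum hy
  have h0 := f_nonneg hy; have h1 := mL1_nonneg hy; have h2 := mL2_nonneg hy
  have h3 := mV_nonneg hy; have h4 := mC_nonneg hy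
  have key := lemA φ hx hε0.le hrow ({fStrat n m}ᶜ) (3 - 4 * mL2 y - ε) ?hT
  · rw [sum_T_fcompl hx] at key
    have k1 : (1:ℝ)/5 - ε ≤ 3 - 4 * mL2 y - ε := by linarith
    have k2 : (3:ℝ)/4 ≤ 1 - x (fStrat n m) := by linarith
    have k3 : ((1:ℝ)/5 - ε) * ((3:ℝ)/4) ≤ (3 - 4 * mL2 y - ε) * (1 - x (fStrat n m)) :=
      mul_le_mul k1 k2 (by linarith) (by linarith)
    linarith
  case hT =>
    intro s hs
    rw [Finset.mem_compl, Finset.mem_singleton] at hs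
    rcases strat_cases s with h|⟨l,rfl⟩|⟨l,rfl⟩|⟨w,rfl⟩|⟨c,rfl⟩
    · exact absurd h hs
    · rw [RP_s1]
      have hp := pm_nonneg hy (negLit l)
      nlinarith [mul_nonneg (show (0:ℝ) ≤ (n:ℝ)-4 by linarith)
          (show 0 ≤ 1 - (mL2 y + mV y + mC y) by linarith),
        mul_nonneg (show (0:ℝ) ≤ (n:ℝ)+1 by linarith) h0]
    · rw [RP_s2]
      nlinarith [mul_nonneg (show (0:ℝ) ≤ (n:ℝ)+1 by linarith) h0,
        mul_nonneg (show (0:ℝ) ≤ 2*(n:ℝ) by linarith)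
          (show 0 ≤ 1 - y (fStrat n m) by linarith)]
    · rw [RP_sV]
      have hp := Pv_nonneg hy w
      nlinarith [mul_nonneg (show (0:ℝ) ≤ (n:ℝ)-4 by linarith)
          (show 0 ≤ 1 - (mL2 y + mV y + mC y) by linarith),
        mul_nonneg (show (0:ℝ) ≤ (n:ℝ)+1 by linarith) h0,
        mul_nonneg (show (0:ℝ) ≤ (n:ℝ) by linarith) hp]
    · rw [RP_sC]
      have hp := Pcl_nonneg φ hy c
      nlinarith [mul_nonneg (show (0:ℝ) ≤ (n:ℝ)-4 by linarith)
          (show 0 ≤ 1 - (mL2 y + mV y + mC y) by linarith),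
        mul_nonneg (show (0:ℝ) ≤ (n:ℝ)+1 by linarith) h0,
        mul_nonneg (show (0:ℝ) ≤ (n:ℝ) by linarith) hp]

theorem C4 (hn4 : (4:ℝ) ≤ (n:ℝ)) (hx : x ∈ simplex (GStrat n m))
    (hy : y ∈ simplex (GStrat n m)) (hε0 : 0 < ε) (hε1 : ε ≤ 1/128)
    (hrow : ∀ s, RP φ y s ≤ EU φ x y + ε)
    (hL1 : 7/10 ≤ mL1 x) :
    2*(n:ℝ) * y (fStrat n m) + 3*(mV y + mC y) ≤ 5*ε/2
      ∧ ((n:ℝ)+1) * y (fStrat n m) ≤ 2*ε := by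
  have hUl := hUlow φ hy hrow
  have hmy := mass_sum hy
  have h0 := f_nonneg hy; have h1 := mL1_nonneg hy; have h2 := mL2_nonneg hy
  have h3 := mV_nonneg hy; have h4 := mC_nonneg hy
  have key := lemA φ hx hε0.le hrow (Finset.univ.image (s1 (n := n) (m := m)))
      (2*(n:ℝ) * y (fStrat n m) + 3*(mV y + mC y) - ε) ?hT
  case hT =>
    intro s hs
    obtain ⟨l, -, rfl⟩ := Finset.mem_image.mp hs
    rw [RP_s1]
    have hp := pm_nonneg hy (negLit l)
    nlinarith [mul_nonneg (show (0:ℝ) ≤ (n:ℝ)-1 by linarith)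
      (show 0 ≤ 1 - (mL2 y + mV y + mC y + y (fStrat n m)) by linarith)]
  rw [sum_T_L1] at key
  have hmain : 2*(n:ℝ) * y (fStrat n m) + 3*(mV y + mC y) ≤ 5*ε/2 := by
    rcases le_or_gt (2*(n:ℝ) * y (fStrat n m) + 3*(mV y + mC y) - ε) 0 with h|h
    · linarith
    · have := mul_le_mul_of_nonneg_left hL1 h.le
      nlinarith [key, this]
  refine ⟨hmain, ?_⟩
  nlinarith [mul_nonneg (show (0:ℝ) ≤ (n:ℝ)-4 by linarith) h0,
    mul_nonneg (show (0:ℝ) ≤ (n:ℝ) by linarith) h0]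

theorem EU_le_blocks (hx : x ∈ simplex (GStrat n m)) (B1 B2 BV BC Bf : ℝ)
    (h1 : ∀ a, RP φ y (s1 a) ≤ B1) (h2 : ∀ l, RP φ y (s2 l) ≤ B2)
    (hV : ∀ w, RP φ y (sV w) ≤ BV) (hC : ∀ c, RP φ y (sC c) ≤ BC)
    (hf : RP φ y (fStrat n m) ≤ Bf) :
    EU φ x y ≤ B1 * mL1 x + B2 * mL2 x + BV * mV x + BC * mC x
      + Bf * x (fStrat n m) := by
  have key : ∀ {k : Type} [Fintype k] (g : k → GStrat n m) (B : ℝ),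
      (∀ i : k, RP φ y (g i) ≤ B) →
      ∑ i, x (g i) * RP φ y (g i) ≤ B * ∑ i, x (g i) := by
    intro k _ g B hB
    rw [Finset.mul_sum]
    exact Finset.sum_le_sum fun i _ => by
      have := mul_le_mul_of_nonneg_left (hB i) (hx.1 (g i)); linarith [this]
  unfold EU
  rw [sum_g]
  have k1 := key (s1 (n := n) (m := m)) B1 h1
  have k2 := key (s2 (n := n) (m := m)) B2 h2
  have kV := key (sV (n := n) (m := m)) BV hV
  have kC := key (sC (n := n) (m := m)) BC hC
  have kf : x (fStrat n m) * RP φ y (fStrat n m) ≤ Bf * x (fStrat n m) := by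
    have := mul_le_mul_of_nonneg_left hf (hx.1 (fStrat n m)); linarith [this]
  have e1 : mL1 x = ∑ l, x (s1 l) := rfl
  have e2 : mL2 x = ∑ l, x (s2 l) := rfl
  have eV : mV x = ∑ w, x (sV w) := rfl
  have eC : mC x = ∑ c, x (sC c) := rfl
  rw [e1, e2, eV, eC]
  linarith [k1, k2, kV, kC, kf]

theorem C5 (hn4 : (4:ℝ) ≤ (n:ℝ)) (hx : x ∈ simplex (GStrat n m))
    (hy : y ∈ simplex (GStrat n m)) (hε0 : 0 < ε) (hε1 : ε ≤ 1/128)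
    (hrow : ∀ s, RP φ y s ≤ EU φ x y + ε)
    (hyA : 2*(n:ℝ) * y (fStrat n m) + 3*(mV y + mC y) ≤ 5*ε/2)
    (hyf2 : ((n:ℝ)+1) * y (fStrat n m) ≤ 2*ε)
    (hyL1 : (3*(n:ℝ) - 2) * mL1 y ≤ ε)
    (hxVC : 2*(n:ℝ) * x (fStrat n m) + 3*(mV x + mC x) ≤ 5*ε/2) :
    (∀ w, 1 - 10*ε ≤ (n:ℝ) * Pv y w) ∧ (∀ c, 1 - 10*ε ≤ (n:ℝ) * Pcl φ y c) := by
  have hmy := mass_sum hy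
  have hmx := mass_sum hx
  have h0 := f_nonneg hy; have h1 := mL1_nonneg hy; have h2 := mL2_nonneg hy
  have h3 := mV_nonneg hy; have h4 := mC_nonneg hy
  have g0 := f_nonneg hx; have g1 := mL1_nonneg hx; have g2 := mL2_nonneg hx
  have g3 := mV_nonneg hx; have g4 := mC_nonneg hx
  have eS : (mL1 y + mL2 y + mV y + mC y) + y (fStrat n m) = 1 := by linarith
  have b1 : ∀ a, RP φ y (s1 a) ≤ (n:ℝ) - 1 := by
    intro a
    rw [RP_s1]
    have hp := pm_nonneg hy (negLit a)
    nlinarith [mul_nonneg (show (0:ℝ) ≤ (n:ℝ)-1 by linarith)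
      (show 0 ≤ 1 - (mL2 y + mV y + mC y) by linarith)]
  have b2 : ∀ l, RP φ y (s2 l) ≤ (n:ℝ) - 1 := by
    intro l
    rw [RP_s2, eS]
    linarith
  have bV : ∀ w, RP φ y (sV w) ≤ (n:ℝ) := by
    intro w
    rw [RP_sV]
    have hp := Pv_nonneg hy w
    nlinarith [mul_nonneg (show (0:ℝ) ≤ (n:ℝ) by linarith)
        (show 0 ≤ 1 - (mL2 y + mV y + mC y) by linarith),
      mul_nonneg (show (0:ℝ) ≤ (n:ℝ) by linarith) hp]
  have bC : ∀ c, RP φ y (sC c) ≤ (n:ℝ) := by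
    intro c
    rw [RP_sC]
    have hp := Pcl_nonneg φ hy c
    nlinarith [mul_nonneg (show (0:ℝ) ≤ (n:ℝ) by linarith)
        (show 0 ≤ 1 - (mL2 y + mV y + mC y) by linarith),
      mul_nonneg (show (0:ℝ) ≤ (n:ℝ) by linarith) hp]
  have bf : RP φ y (fStrat n m) ≤ (n:ℝ) - 1 + 2*ε := by
    rw [RP_f]
    have e' : ((n:ℝ)-1) * (mL1 y + mL2 y + mV y + mC y + y (fStrat n m)) = (n:ℝ)-1 := by
      rw [hmy, mul_one]
    linarith [e']
  have hB := EU_le_blocks φ (y := y) hx ((n:ℝ)-1) ((n:ℝ)-1) (n:ℝ) (n:ℝ) ((n:ℝ)-1+2*ε)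
    b1 b2 bV bC bf
  have hUhi : EU φ x y ≤ (n:ℝ) - 1 + 3*ε := by
    have e : ((n:ℝ)-1) * (mL1 x + mL2 x + mV x + mC x + x (fStrat n m)) = (n:ℝ)-1 := by
      rw [hmx, mul_one]
    have hxf1 : x (fStrat n m) ≤ 1 := by linarith
    have hεxf : 2*ε * x (fStrat n m) ≤ 2*ε := by
      have h' := mul_le_mul_of_nonneg_left hxf1 (show (0:ℝ) ≤ 2*ε by linarith)
      linarith [h']
    have hxVC' : mV x + mC x ≤ 5*ε/6 := by
      linarith [mul_nonneg (show (0:ℝ) ≤ 2*(n:ℝ) by linarith) g0]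
    linarith [hB, e, hεxf, hxVC']
  have en : (n:ℝ) * (mL1 y + mL2 y + mV y + mC y + y (fStrat n m)) = (n:ℝ) := by
    rw [hmy, mul_one]
  have hnL1 : 2*(n:ℝ) * mL1 y ≤ ε := by
    linarith [mul_nonneg (show (0:ℝ) ≤ (n:ℝ)-2 by linarith) h1]
  have hnyf : (n:ℝ) * y (fStrat n m) ≤ 5*ε/4 := by linarith
  have hVC : mV y + mC y ≤ 5*ε/6 := by
    linarith [mul_nonneg (show (0:ℝ) ≤ 2*(n:ℝ) by linarith) h0]
  constructor
  · intro w
    have h := hrow (sV w)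
    rw [RP_sV] at h
    linarith [h, hUhi, en, hnL1, hnyf, hVC]
  · intro c
    have h := hrow (sC c)
    rw [RP_sC] at h
    linarith [h, hUhi, en, hnL1, hnyf, hVC]

theorem C8 (hn4 : (4:ℝ) ≤ (n:ℝ)) (hx : x ∈ simplex (GStrat n m))
    (hy : y ∈ simplex (GStrat n m)) (hε0 : 0 < ε)
    (hrow : ∀ s, RP φ y s ≤ EU φ x y + ε) (a : Lit n) :
    (3 * pm y (negLit a) - ε) * qm x a ≤ ε := by
  have hUl := hUlow φ hy hrow
  have hmy := mass_sum hy
  have h0 := f_nonneg hy; have h1 := mL1_nonneg hy; have h2 := mL2_nonneg hy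
  have h3 := mV_nonneg hy; have h4 := mC_nonneg hy
  have key := lemA φ hx hε0.le hrow {s1 a} (3 * pm y (negLit a) - ε) ?hT
  · rwa [Finset.sum_singleton] at key
  case hT =>
    intro s hs
    rw [Finset.mem_singleton] at hs
    subst hs
    rw [RP_s1]
    nlinarith [mul_nonneg (show (0:ℝ) ≤ (n:ℝ)-1 by linarith)
        (show 0 ≤ 1 - (mL2 y + mV y + mC y) by linarith),
      mul_nonneg (show (0:ℝ) ≤ (n:ℝ)+1 by linarith) h0]

end CSAux

namespace CSAux
open Finset
variable {n m : ℕ}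

set_option maxHeartbeats 2000000 in
theorem hard (hn : 4 ≤ n) (φ : CNF3 n m) {ε : ℝ} (hε : ε = 1 / (2 * (n:ℝ)^3))
    {x y : GStrat n m → ℝ} (hN : IsEpsNash (gU1 φ) (gU2 φ) x y ε)
    (hd : supp x ∩ supp y = ∅) : φ.Satisfiable := by
  classical
  obtain ⟨hx, hy, hrow0, hcol0⟩ := hN
  have hn4 : (4:ℝ) ≤ (n:ℝ) := by exact_mod_cast hn
  have hnp : (0:ℝ) < n := by linarith
  have hε0 : 0 < ε := by rw [hε]; positivity
  have hn2 : 16 ≤ (n:ℝ)^2 := by nlinarith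
  have hn3 : 64 ≤ (n:ℝ)^3 := by nlinarith
  have hε1 : ε ≤ 1/128 := by
    rw [hε, div_le_div_iff₀ (by positivity) (by norm_num)]
    linarith
  have e1 : ε * (2 * (n:ℝ)^3) = 1 := by rw [hε]; field_simp
  have hε0' : 0 < ε := by rw [hε]; positivity
  have hnε32 : (n:ℝ)*ε ≤ 1/32 := by
    have hh := mul_nonneg (show (0:ℝ) ≤ 2*(n:ℝ)^2 - 32 by linarith)
      (mul_nonneg (by linarith : (0:ℝ) ≤ (n:ℝ)) hε0'.le)
    linarith [e1, hh]
  have hh3 : 2*ε*(n:ℝ)^2 ≤ 1/4 := by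
    have hh := mul_nonneg (show (0:ℝ) ≤ (n:ℝ) - 4 by linarith)
      (mul_nonneg (mul_nonneg (by norm_num : (0:ℝ) ≤ 2) hε0'.le)
        (show (0:ℝ) ≤ (n:ℝ)^2 by positivity))
    linarith [e1, hh]
  -- orientation A
  have hrowA : ∀ s, RP φ y s ≤ EU φ x y + ε := by
    intro s
    have h := hrow0 s
    rw [payoff_pure_left, payoff_RP φ] at h
    exact h
  -- orientation B
  have hxs' := simplex_comp hx
  have hys' := simplex_comp hy
  have hrowB : ∀ s, RP φ (x ∘ σg) s ≤ EU φ (y ∘ σg) (x ∘ σg) + ε := by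
    intro s
    have h := hcol0 (σg s)
    rw [payoff_gU2_pure, payoff_gU2, σg_invol] at h
    exact h
  have hdisj : ¬(0 < x (fStrat n m) ∧ 0 < y (fStrat n m)) := by
    rintro ⟨hxf, hyf⟩
    have hmem : fStrat n m ∈ supp x ∩ supp y := ⟨hxf, hyf⟩
    rw [hd] at hmem
    exact hmem
  have hmx := mass_sum hx; have hmy := mass_sum hy
  have h0 := f_nonneg hy; have h1 := mL1_nonneg hy; have h2 := mL2_nonneg hy
  have h3 := mV_nonneg hy; have h4 := mC_nonneg hy
  have g0 := f_nonneg hx; have g1 := mL1_nonneg hx; have g2 := mL2_nonneg hx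
  have g3 := mV_nonneg hx; have g4 := mC_nonneg hx
  have c1A := C1 φ hn4 hx hy hε0 hrowA
  have c1B := C1 φ hn4 hys' hxs' hε0 hrowB
  have c1B' : ((2*(n:ℝ)+1) * x (fStrat n m) - 1 - ε) * (1 - y (fStrat n m)) ≤ ε := c1B
  -- C2
  have hyf14 : y (fStrat n m) ≤ 1/4 := by
    by_contra hcon
    push_neg at hcon
    have k : (9:ℝ)/4 ≤ (2*(n:ℝ)+1) * y (fStrat n m) := by
      have hk := mul_le_mul (show (9:ℝ) ≤ 2*(n:ℝ)+1 by linarith) hcon.le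
        (by norm_num) (by linarith)
      linarith [hk]
    have k2 : (1:ℝ) ≤ (2*(n:ℝ)+1) * y (fStrat n m) - 1 - ε := by linarith
    have k3 : 1 - x (fStrat n m) ≤ ε := by
      have hk := mul_le_mul_of_nonneg_right k2
        (show 0 ≤ 1 - x (fStrat n m) by linarith)
      linarith [c1A, hk]
    exact hdisj ⟨by linarith, by linarith⟩
  have hxf14 : x (fStrat n m) ≤ 1/4 := by
    by_contra hcon
    push_neg at hcon
    have k : (9:ℝ)/4 ≤ (2*(n:ℝ)+1) * x (fStrat n m) := by
      have hk := mul_le_mul (show (9:ℝ) ≤ 2*(n:ℝ)+1 by linarith) hcon.le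
        (by norm_num) (by linarith)
      linarith [hk]
    have k2 : (1:ℝ) ≤ (2*(n:ℝ)+1) * x (fStrat n m) - 1 - ε := by linarith
    have k3 : 1 - y (fStrat n m) ≤ ε := by
      have hk := mul_le_mul_of_nonneg_right k2
        (show 0 ≤ 1 - y (fStrat n m) by linarith)
      linarith [c1B', hk]
    exact hdisj ⟨by linarith, by linarith⟩
  -- C3
  have hL2y : 7/10 ≤ mL2 y := C3b φ hn4 hx hy hε0 hε1 hrowA hxf14
  have hL1x : 7/10 ≤ mL1 x := C3b φ hn4 hys' hxs' hε0 hε1 hrowB hyf14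
  have c3aB : (3*(n:ℝ) - 2) * mL1 y ≤ ε := C3a φ hn4 hys' hxs' hε0 hε1 hrowB
  have c3aA : (3*(n:ℝ) - 2) * mL2 x ≤ ε := C3a φ hn4 hx hy hε0 hε1 hrowA
  -- C4
  have c4A := C4 φ hn4 hx hy hε0 hε1 hrowA hL1x
  have c4B := C4 φ hn4 hys' hxs' hε0 hε1 hrowB hL2y
  have c4B1 : 2*(n:ℝ) * x (fStrat n m) + 3*(mV x + mC x) ≤ 5*ε/2 := c4B.1
  have c4B2 : ((n:ℝ)+1) * x (fStrat n m) ≤ 2*ε := c4B.2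
  -- C5
  have c5A := C5 φ hn4 hx hy hε0 hε1 hrowA c4A.1 c4A.2 c3aB c4B1
  have c5B := C5 φ hn4 hys' hxs' hε0 hε1 hrowB c4B1 c4B2 c3aA c4A.1
  -- assignment
  refine ⟨fun w => if pm y (w, false) ≤ pm y (w, true) then true else false, fun c => ?_⟩
  have hPc := c5A.2 c
  have hex : ∃ l ∈ φ.clause c, Pcl φ y c ≤ 3 * pm y l := by
    by_contra hcon
    push_neg at hcon
    have hne : (φ.clause c).Nonempty := by
      rw [← Finset.card_pos, φ.card3]; norm_num
    have hlt : ∑ l ∈ φ.clause c, pm y l < ∑ _l ∈ φ.clause c, Pcl φ y c / 3 :=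
      Finset.sum_lt_sum_of_nonempty hne fun l hl => by
        have := hcon l hl; linarith
    rw [Finset.sum_const, φ.card3, nsmul_eq_mul] at hlt
    have : Pcl φ y c < Pcl φ y c := by
      calc Pcl φ y c = ∑ l ∈ φ.clause c, pm y l := rfl
        _ < (3:ℕ) * (Pcl φ y c / 3) := hlt
        _ = Pcl φ y c := by push_cast; ring
    exact lt_irrefl _ this
  obtain ⟨l, hlc, hl3⟩ := hex
  refine ⟨l, hlc, ?_⟩
  by_contra hbad
  have hgenl : pm y l ≤ pm y (negLit l) := by
    obtain ⟨v, b⟩ := l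
    cases b
    · by_cases hc2 : pm y (v, false) ≤ pm y (v, true)
      · exact hc2
      · exact absurd (show (if pm y (v, false) ≤ pm y (v, true) then true else false) = false
          from by simp [hc2]) hbad
    · by_cases hc2 : pm y (v, false) ≤ pm y (v, true)
      · exact absurd (show (if pm y (v, false) ≤ pm y (v, true) then true else false) = true
          from by simp [hc2]) hbad
      · exact le_of_not_ge hc2
  -- quantities
  have hq1 := C8 φ hn4 hx hy hε0 hrowA l
  have hq2 := C8 φ hn4 hx hy hε0 hrowA (negLit l)
  rw [negLit_negLit] at hq2
  have hQ := c5B.1 l.1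
  have hPveq : Pv (x ∘ σg) l.1 = qm x l + qm x (negLit l) := by
    obtain ⟨v, b⟩ := l
    cases b
    · show qm x (v, true) + qm x (v, false) = qm x (v, false) + qm x (v, true)
      ring
    · rfl
  rw [hPveq] at hQ
  have pnn := pm_nonneg hy l
  have qnn1 := qm_nonneg hx l
  have qnn2 := qm_nonneg hx (negLit l)
  have hA3 : (n:ℝ) * Pcl φ y c ≤ (n:ℝ) * (3 * pm y l) :=
    mul_le_mul_of_nonneg_left hl3 (by linarith)
  -- g := 3 * pm y l - ε
  have k1 : (3 * pm y l - ε) * qm x l ≤ ε := by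
    have hk := mul_le_mul_of_nonneg_right
      (show 3 * pm y l - ε ≤ 3 * pm y (negLit l) - ε by linarith) qnn1
    linarith [hq1, hk]
  have k2 : (3 * pm y l - ε) * qm x (negLit l) ≤ ε := hq2
  have hgS : (3 * pm y l - ε) * (qm x l + qm x (negLit l)) ≤ 2*ε := by
    have he : (3 * pm y l - ε) * (qm x l + qm x (negLit l))
        = (3 * pm y l - ε) * qm x l + (3 * pm y l - ε) * qm x (negLit l) := by ring
    rw [he]; linarith
  -- final contradiction
  have hng : (1 - 10*ε) - (n:ℝ)*ε ≤ (n:ℝ) * (3 * pm y l - ε) := by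
    have : (n:ℝ) * (3 * pm y l - ε) = (n:ℝ) * (3 * pm y l) - (n:ℝ)*ε := by ring
    linarith [hPc, hA3]
  have hgpos : 0 ≤ (1 - 10*ε) - (n:ℝ)*ε := by linarith
  have hh1 : ((1 - 10*ε) - (n:ℝ)*ε) * (1 - 10*ε)
      ≤ ((n:ℝ) * (3 * pm y l - ε)) * ((n:ℝ) * (qm x l + qm x (negLit l))) := by
    apply mul_le_mul hng hQ (by linarith) (by linarith)
  have hh2 : ((n:ℝ) * (3 * pm y l - ε)) * ((n:ℝ) * (qm x l + qm x (negLit l)))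
      ≤ 2*ε*(n:ℝ)^2 := by
    have hk := mul_le_mul_of_nonneg_left hgS (show (0:ℝ) ≤ (n:ℝ)^2 by positivity)
    linarith [hk]
  have hh4a : (9:ℝ)/10 - 1/32 ≤ (1 - 10*ε) - (n:ℝ)*ε := by linarith
  have hh4b : (9:ℝ)/10 ≤ 1 - 10*ε := by linarith
  have hh4 : ((9:ℝ)/10 - 1/32) * (9/10) ≤ ((1 - 10*ε) - (n:ℝ)*ε) * (1 - 10*ε) :=
    mul_le_mul hh4a hh4b (by norm_num) hgpos
  linarith [hh1, hh2, hh3, hh4]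

end CSAux

namespace CSAux
open Finset
variable {n m : ℕ}

theorem unifL1_comp (a : Fin n → Bool) :
    (unifL1 a : GStrat n m → ℝ) ∘ σg = unifL2 a := by
  funext s; rcases s with l|l|w|c|u <;> rfl

theorem unifL2_comp (a : Fin n → Bool) :
    (unifL2 a : GStrat n m → ℝ) ∘ σg = unifL1 a := by
  funext s; rcases s with l|l|w|c|u <;> rfl

theorem easy (hn : 4 ≤ n) (φ : CNF3 n m) {a : Fin n → Bool} (ha : SatAssign φ a) :
    IsEpsNash (gU1 φ) (gU2 φ) (unifL1 a) (unifL2 a) 0 ∧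
      supp (unifL1 (m := m) a) ∩ supp (unifL2 a) = ∅ := by
  have hn4 : (4:ℝ) ≤ (n:ℝ) := by exact_mod_cast hn
  have hnp : (0:ℝ) < n := by linarith
  have hsum1 : (∑ l : Lit n, if a l.1 = l.2 then 1/(n:ℝ) else 0) = 1 := by
    rw [Fintype.sum_prod_type]
    have hv : ∀ v : Fin n, (∑ b : Bool, if a v = b then 1/(n:ℝ) else 0) = 1/(n:ℝ) := by
      intro v; rw [Fintype.sum_bool]; cases h : a v <;> simp [h]
    rw [Finset.sum_congr rfl fun v _ => hv v, Finset.sum_const, Finset.card_univ,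
      Fintype.card_fin, nsmul_eq_mul]
    field_simp
  have hL1x : mL1 (unifL1 (m := m) a) = 1 := hsum1
  have hL2y : mL2 (unifL2 (m := m) a) = 1 := hsum1
  have zer : ∀ {k : Type} [Fintype k] (g : k → ℝ), (∀ i, g i = 0) → ∑ i, g i = 0 :=
    fun g hg => Finset.sum_eq_zero fun i _ => hg i
  have hL2x : mL2 (unifL1 (m := m) a) = 0 := zer _ fun l => rfl
  have hVx : mV (unifL1 (m := m) a) = 0 := zer _ fun w => rfl
  have hCx : mC (unifL1 (m := m) a) = 0 := zer _ fun c => rfl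
  have hfx : unifL1 (m := m) a (fStrat n m) = 0 := rfl
  have hL1y : mL1 (unifL2 (m := m) a) = 0 := zer _ fun l => rfl
  have hVy : mV (unifL2 (m := m) a) = 0 := zer _ fun w => rfl
  have hCy : mC (unifL2 (m := m) a) = 0 := zer _ fun c => rfl
  have hfy : unifL2 (m := m) a (fStrat n m) = 0 := rfl
  have hnn : ∀ s : GStrat n m, 0 ≤ unifL1 a s := by
    rintro (l|l|w|c|u)
    · show (0:ℝ) ≤ if a l.1 = l.2 then 1/(n:ℝ) else 0
      split <;> positivity
    all_goals exact le_refl 0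
  have hnn2 : ∀ s : GStrat n m, 0 ≤ unifL2 a s := by
    rintro (l|l|w|c|u)
    case inr.inl =>
      show (0:ℝ) ≤ if a l.1 = l.2 then 1/(n:ℝ) else 0
      split <;> positivity
    all_goals exact le_refl 0
  have hxs : unifL1 a ∈ simplex (GStrat n m) := by
    refine ⟨hnn, ?_⟩
    rw [sum_g]
    show mL1 (unifL1 (m := m) a) + mL2 (unifL1 a) + mV (unifL1 a) + mC (unifL1 a)
      + unifL1 a (fStrat n m) = 1
    rw [hL1x, hL2x, hVx, hCx, hfx]; norm_num
  have hys : unifL2 a ∈ simplex (GStrat n m) := by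
    refine ⟨hnn2, ?_⟩
    rw [sum_g]
    show mL1 (unifL2 (m := m) a) + mL2 (unifL2 a) + mV (unifL2 a) + mC (unifL2 a)
      + unifL2 a (fStrat n m) = 1
    rw [hL1y, hL2y, hVy, hCy, hfy]; norm_num
  have hpm : ∀ l : Lit n, pm (unifL2 (m := m) a) l = if a l.1 = l.2 then 1/(n:ℝ) else 0 :=
    fun l => rfl
  have hPv : ∀ w, Pv (unifL2 (m := m) a) w = 1/(n:ℝ) := by
    intro w
    show (if a w = true then 1/(n:ℝ) else 0) + (if a w = false then 1/(n:ℝ) else 0) = 1/(n:ℝ)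
    cases h : a w <;> simp [h]
  have hRPle : ∀ s, RP φ (unifL2 a) s ≤ (n:ℝ) - 1 := by
    intro s
    rcases strat_cases s with h|⟨l,rfl⟩|⟨l,rfl⟩|⟨w,rfl⟩|⟨c,rfl⟩
    · subst h
      rw [RP_f, hL2y, hL1y, hVy, hCy, hfy]; norm_num
    · rw [RP_s1, hL2y, hVy, hCy]
      have hp : 0 ≤ pm (unifL2 (m := m) a) (negLit l) := hys.1 _
      linarith
    · rw [RP_s2, hL2y, hL1y, hVy, hCy, hfy]; linarith
    · rw [RP_sV, hL2y, hVy, hCy, hPv w]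
      have he : (n:ℝ) * (1 - 1/(n:ℝ)) = (n:ℝ) - 1 := by field_simp
      linarith
    · rw [RP_sC, hL2y, hVy, hCy]
      obtain ⟨l0, hl0c, hl0⟩ := ha c
      have hp0 : pm (unifL2 (m := m) a) l0 = 1/(n:ℝ) := by rw [hpm, if_pos hl0]
      have hPcl : 1/(n:ℝ) ≤ Pcl φ (unifL2 a) c := by
        rw [← hp0]
        exact Finset.single_le_sum (f := pm (unifL2 (m := m) a))
          (fun i _ => hys.1 _) hl0c
      have hk := mul_le_mul_of_nonneg_left hPcl (show (0:ℝ) ≤ (n:ℝ) by linarith)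
      have he : (n:ℝ) * (1/(n:ℝ)) = 1 := by field_simp
      nlinarith [hk]
  have hEU : EU φ (unifL1 a) (unifL2 a) = (n:ℝ) - 1 := by
    unfold EU
    rw [sum_g]
    have z2 : ∑ l : Lit n, unifL1 (m := m) a (s2 l) * RP φ (unifL2 a) (s2 l) = 0 :=
      Finset.sum_eq_zero fun l _ => by show (0:ℝ) * _ = 0; ring
    have z3 : ∑ w : Fin n, unifL1 (m := m) a (sV w) * RP φ (unifL2 a) (sV w) = 0 :=
      Finset.sum_eq_zero fun w _ => by show (0:ℝ) * _ = 0; ring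
    have z4 : ∑ c : Fin m, unifL1 (m := m) a (sC c) * RP φ (unifL2 a) (sC c) = 0 :=
      Finset.sum_eq_zero fun c _ => by show (0:ℝ) * _ = 0; ring
    have z5 : unifL1 (m := m) a (fStrat n m) * RP φ (unifL2 a) (fStrat n m) = 0 := by
      rw [hfx]; ring
    have z1 : ∑ l : Lit n, unifL1 (m := m) a (s1 l) * RP φ (unifL2 a) (s1 l)
        = ∑ l : Lit n, unifL1 (m := m) a (s1 l) * ((n:ℝ) - 1) := by
      refine Finset.sum_congr rfl fun l _ => ?_
      by_cases hsat : a l.1 = l.2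
      · have hneg : pm (unifL2 (m := m) a) (negLit l) = 0 := by
          rw [hpm]
          apply if_neg
          show ¬ a l.1 = !l.2
          rw [hsat]; simp
        rw [RP_s1, hL2y, hVy, hCy, hneg]; ring
      · have hz : unifL1 (m := m) a (s1 l) = 0 := if_neg hsat
        rw [hz]; ring
    rw [z1, z2, z3, z4, z5, ← Finset.sum_mul]
    have : (∑ l : Lit n, unifL1 (m := m) a (s1 l)) = 1 := hL1x
    rw [this]; ring
  refine ⟨⟨hxs, hys, ?_, ?_⟩, ?_⟩
  · intro s
    rw [payoff_pure_left, payoff_RP φ, hEU, add_zero]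
    exact hRPle s
  · intro t
    rw [payoff_gU2_pure φ, payoff_gU2 φ, unifL1_comp, unifL2_comp, hEU, add_zero]
    exact hRPle (σg t)
  · rw [Set.eq_empty_iff_forall_notMem]
    rintro s ⟨hs1, hs2⟩
    simp only [supp, Set.mem_setOf_eq] at hs1 hs2
    rcases s with l|l|w|c|u
    · exact lt_irrefl 0 hs2
    · exact lt_irrefl 0 hs1
    · exact lt_irrefl 0 hs1
    · exact lt_irrefl 0 hs1
    · exact lt_irrefl 0 hs1

end CSAux

theorem stmt16 {n m : ℕ} (hn : 4 ≤ n) (φ : CNF3 n m)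
    (ε : ℝ) (hε : ε = 1 / (2 * (n : ℝ) ^ 3)) :
    (φ.Satisfiable ↔ ∃ x y : GStrat n m → ℝ,
        IsEpsNash (gU1 φ) (gU2 φ) x y ε ∧ supp x ∩ supp y = ∅) ∧
    (φ.Satisfiable → ∃ a : Fin n → Bool, SatAssign φ a ∧
        IsEpsNash (gU1 φ) (gU2 φ) (unifL1 a) (unifL2 a) 0 ∧
        supp (unifL1 (m := m) a) ∩ supp (unifL2 a) = ∅) := by
  have hn4 : (4:ℝ) ≤ (n:ℝ) := by exact_mod_cast hn
  have hε0 : 0 ≤ ε := by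
    rw [hε]
    apply le_of_lt
    apply div_pos one_pos
    nlinarith [hn4, sq_nonneg ((n:ℝ))]
  constructor
  · constructor
    · intro hsat
      obtain ⟨a, ha⟩ := hsat
      obtain ⟨hN0, hdisj⟩ := CSAux.easy hn φ ha
      refine ⟨unifL1 a, unifL2 a, ?_, hdisj⟩
      obtain ⟨h1, h2, h3, h4⟩ := hN0
      exact ⟨h1, h2, fun s => by have := h3 s; linarith,
        fun s => by have := h4 s; linarith⟩
    · rintro ⟨x, y, hN, hd⟩
      exact CSAux.hard hn φ hε hN hd
  · intro hsat
    obtain ⟨a, ha⟩ := hsat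
    exact ⟨a, ha, (CSAux.easy hn φ ha).1, (CSAux.easy hn φ ha).2⟩
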